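/- Let Σ ⊆ L_inv be finite, contain 𝟏 and 𝟎, and be closed under taking subformulas, and let M = ⟨F,v⟩ be a tree-like KGinv-model of finite height h with root w. Then there is a tree-like KGinvF-model M̂ = ⟨F̂,T̂,v̂⟩ with root w whose underlying frame F̂ is a subframe of F, such that the number of worlds of M̂ is at most |Σ|^h, |T̂(w')| ≤ |Σ| for every world w' of M̂, and v(φ,w) = v̂(φ,w) for every φ ∈ Σ. Moreover, if M is crisp then M̂ is crisp. -/

import Mathlib

noncomputable def Gimp (x y : ℝ) : ℝ := if x ≤ y then 1 else y

inductive Fml : Type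
  | var : ℕ → Fml
  | inv : Fml → Fml
  | and : Fml → Fml → Fml
  | imp : Fml → Fml → Fml
  | box : Fml → Fml
  | dia : Fml → Fml
  deriving DecidableEq

noncomputable def Fml.eval {W : Type} (R : W → W → ℝ) (v : ℕ → W → ℝ) : Fml → W → ℝ
  | .var p, w => v p w
  | .inv φ, w => 1 - Fml.eval R v φ w
  | .and φ χ, w => min (Fml.eval R v φ w) (Fml.eval R v χ w)
  | .imp φ χ, w => Gimp (Fml.eval R v φ w) (Fml.eval R v χ w)
  | .box φ, w => sInf (Set.range fun w' => Gimp (R w w') (Fml.eval R v φ w'))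
  | .dia φ, w => sSup (Set.range fun w' => min (R w w') (Fml.eval R v φ w'))

def KGinvValid {W : Type} (R : W → W → ℝ) (φ : Fml) : Prop :=
  ∀ v : ℕ → W → ℝ, (∀ p w, v p w ∈ Set.Icc (0:ℝ) 1) → ∀ w : W, Fml.eval R v φ w = 1

/-- An F-model: the data of a fuzzy frame with finitely many admissible modal values
at each state, together with a valuation. -/
structure FModel (W : Type) where
  R : W → W → ℝ
  T : W → Set ℝ
  v : ℕ → W → ℝ

/-- The conditions on the data of an F-model. -/
def FModel.Good {W : Type} (M : FModel W) : Prop :=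
  (∀ w w', M.R w w' ∈ Set.Icc (0:ℝ) 1) ∧
  (∀ w, (M.T w).Finite) ∧
  (∀ w, M.T w ⊆ Set.Icc (0:ℝ) 1) ∧
  (∀ w, (0:ℝ) ∈ M.T w ∧ (1:ℝ) ∈ M.T w) ∧
  (∀ p w, M.v p w ∈ Set.Icc (0:ℝ) 1)

noncomputable def FModel.eval {W : Type} (M : FModel W) : Fml → W → ℝ
  | .var p, w => M.v p w
  | .inv φ, w => 1 - FModel.eval M φ w
  | .and φ χ, w => min (FModel.eval M φ w) (FModel.eval M χ w)
  | .imp φ χ, w => Gimp (FModel.eval M φ w) (FModel.eval M χ w)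
  | .box φ, w =>
      sSup {x | x ∈ M.T w ∧
        x ≤ sInf (Set.range fun w' => Gimp (M.R w w') (FModel.eval M φ w'))}
  | .dia φ, w =>
      sInf {x | x ∈ M.T w ∧
        sSup (Set.range fun w' => min (M.R w w') (FModel.eval M φ w')) ≤ x}

/-- The accessibility graph of a fuzzy relation. -/
def Epos {W : Type} (R : W → W → ℝ) : W → W → Prop := fun a b => 0 < R a b

/-- The directed graph E on W is a tree with root r. -/
def IsTreeLike {W : Type} (E : W → W → Prop) (r : W) : Prop :=
  (∀ w, Relation.ReflTransGen E r w) ∧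
  (∀ w, ¬ E w r) ∧
  (∀ u u' w, E u w → E u' w → u = u') ∧
  (∀ w, ¬ Relation.TransGen E w w)

/-- Every E-path starting at the root r has length at most n. -/
def HeightLE {W : Type} (E : W → W → Prop) (r : W) (n : ℕ) : Prop :=
  ∀ (k : ℕ) (f : ℕ → W), f 0 = r → (∀ i, i < k → E (f i) (f (i+1))) → k ≤ n

def Fml.One : Fml := .imp (.var 0) (.var 0)
def Fml.Zero : Fml := .inv Fml.One

/-- The immediate subformulas of a formula. -/
def Fml.imSubs : Fml → List Fml
  | .var _ => []
  | .inv φ => [φ]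
  | .and φ χ => [φ, χ]
  | .imp φ χ => [φ, χ]
  | .box φ => [φ]
  | .dia φ => [φ]

open Set

lemma Gimp_le_one {x y : ℝ} (hy : y ≤ 1) : Gimp x y ≤ 1 := by
  unfold Gimp; split <;> simp [hy]

lemma Gimp_nonneg {x y : ℝ} (hy : 0 ≤ y) : 0 ≤ Gimp x y := by
  unfold Gimp; split <;> norm_num [hy]

lemma Gimp_zero_left {y : ℝ} (hy : 0 ≤ y) : Gimp 0 y = 1 := by
  unfold Gimp; simp [hy]

lemma Gimp_self {x : ℝ} : Gimp x x = 1 := by unfold Gimp; simp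

lemma eval_One {W : Type} (R : W → W → ℝ) (v : ℕ → W → ℝ) (w : W) :
    Fml.eval R v Fml.One w = 1 := by
  simp [Fml.One, Fml.eval, Gimp_self]

lemma eval_Zero {W : Type} (R : W → W → ℝ) (v : ℕ → W → ℝ) (w : W) :
    Fml.eval R v Fml.Zero w = 0 := by
  simp [Fml.Zero, Fml.eval, eval_One, Gimp_self]

lemma eval_mem {W : Type} [Nonempty W] {R : W → W → ℝ}
    (hR : ∀ w w', R w w' ∈ Set.Icc (0:ℝ) 1) {v : ℕ → W → ℝ}
    (hv : ∀ p w, v p w ∈ Set.Icc (0:ℝ) 1) :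
    ∀ (φ : Fml) (w : W), Fml.eval R v φ w ∈ Set.Icc (0:ℝ) 1 := by
  intro φ
  induction φ with
  | var p => exact fun w => hv p w
  | inv φ ih =>
      intro w; have := ih w; simp only [Fml.eval, Set.mem_Icc] at *; constructor <;> linarith [this.1, this.2]
  | and φ χ ih1 ih2 =>
      intro w; have h1 := ih1 w; have h2 := ih2 w
      simp only [Fml.eval, Set.mem_Icc] at *
      exact ⟨le_min h1.1 h2.1, min_le_of_left_le h1.2⟩
  | imp φ χ ih1 ih2 =>
      intro w; have h2 := ih2 w
      simp only [Fml.eval, Set.mem_Icc] at *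
      exact ⟨Gimp_nonneg h2.1, Gimp_le_one h2.2⟩
  | box φ ih =>
      intro w
      have hbd : ∀ y ∈ Set.range (fun w' => Gimp (R w w') (Fml.eval R v φ w')), y ∈ Set.Icc (0:ℝ) 1 := by
        rintro y ⟨w', rfl⟩
        exact ⟨Gimp_nonneg (ih w').1, Gimp_le_one (ih w').2⟩
      obtain ⟨w0⟩ := ‹Nonempty W›
      constructor
      · exact le_csInf (Set.range_nonempty _) (fun y hy => (hbd y hy).1)
      · exact le_trans (csInf_le ⟨0, fun y hy => (hbd y hy).1⟩ ⟨w0, rfl⟩) (hbd _ ⟨w0, rfl⟩).2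
  | dia φ ih =>
      intro w
      have hbd : ∀ y ∈ Set.range (fun w' => min (R w w') (Fml.eval R v φ w')), y ∈ Set.Icc (0:ℝ) 1 := by
        rintro y ⟨w', rfl⟩
        exact ⟨le_min (hR w w').1 (ih w').1, min_le_of_left_le (hR w w').2⟩
      obtain ⟨w0⟩ := ‹Nonempty W›
      constructor
      · exact le_trans (hbd _ ⟨w0, rfl⟩).1 (le_csSup ⟨1, fun y hy => (hbd y hy).2⟩ ⟨w0, rfl⟩)
      · exact csSup_le (Set.range_nonempty _) (fun y hy => (hbd y hy).2)

lemma FModel.eval_mem {α : Type} [Nonempty α] {M : FModel α} (hG : M.Good) :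
    ∀ (φ : Fml) (a : α), M.eval φ a ∈ Set.Icc (0:ℝ) 1 := by
  obtain ⟨hR, hTfin, hTsub, hT01, hv⟩ := hG
  intro φ
  induction φ with
  | var p => exact fun a => hv p a
  | inv φ ih =>
      intro a; have := ih a; simp only [FModel.eval, Set.mem_Icc] at *
      constructor <;> linarith [this.1, this.2]
  | and φ χ ih1 ih2 =>
      intro a; have h1 := ih1 a; have h2 := ih2 a
      simp only [FModel.eval, Set.mem_Icc] at *
      exact ⟨le_min h1.1 h2.1, min_le_of_left_le h1.2⟩
  | imp φ χ ih1 ih2 =>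
      intro a; have h2 := ih2 a
      simp only [FModel.eval, Set.mem_Icc] at *
      exact ⟨Gimp_nonneg h2.1, Gimp_le_one h2.2⟩
  | box φ ih =>
      intro a
      have h0 : (0:ℝ) ∈ {x | x ∈ M.T a ∧ x ≤ sInf (Set.range fun w' => Gimp (M.R a w') (M.eval φ w'))} := by
        refine ⟨(hT01 a).1, le_csInf (Set.range_nonempty _) ?_⟩
        rintro y ⟨w', rfl⟩; exact Gimp_nonneg (ih w').1
      have hsub : {x | x ∈ M.T a ∧ x ≤ sInf (Set.range fun w' => Gimp (M.R a w') (M.eval φ w'))} ⊆ M.T a :=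
        fun x hx => hx.1
      have hfin : ({x | x ∈ M.T a ∧ x ≤ sInf (Set.range fun w' => Gimp (M.R a w') (M.eval φ w'))}).Finite :=
        (hTfin a).subset hsub
      have hmem := Set.Nonempty.csSup_mem ⟨0, h0⟩ hfin
      have := hTsub a (hsub hmem)
      exact ⟨this.1, this.2⟩
  | dia φ ih =>
      intro a
      have h1 : (1:ℝ) ∈ {x | x ∈ M.T a ∧ sSup (Set.range fun w' => min (M.R a w') (M.eval φ w')) ≤ x} := by
        refine ⟨(hT01 a).2, csSup_le (Set.range_nonempty _) ?_⟩
        rintro y ⟨w', rfl⟩; exact min_le_of_left_le (hR a w').2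
      have hsub : {x | x ∈ M.T a ∧ sSup (Set.range fun w' => min (M.R a w') (M.eval φ w')) ≤ x} ⊆ M.T a :=
        fun x hx => hx.1
      have hfin := (hTfin a).subset hsub
      have hmem := Set.Nonempty.csInf_mem ⟨1, h1⟩ hfin
      have := hTsub a (hsub hmem)
      exact ⟨this.1, this.2⟩
lemma inf_helper {α β : Type} [Nonempty β] (f : α → ℝ) (g : β → ℝ) (e : β → α)
    (hfe : ∀ b, f (e b) = g b) (hout : ∀ a, (∀ b, e b ≠ a) → f a = 1)
    (hub : ∀ a, f a ≤ 1) (hlb : ∀ a, 0 ≤ f a) :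
    sInf (Set.range f) = sInf (Set.range g) := by
  obtain ⟨b0⟩ := ‹Nonempty β›
  have hbddf : BddBelow (Set.range f) := ⟨0, by rintro y ⟨a, rfl⟩; exact hlb a⟩
  have hbddg : BddBelow (Set.range g) := ⟨0, by rintro y ⟨b, rfl⟩; rw [← hfe b]; exact hlb _⟩
  apply le_antisymm
  · apply csInf_le_csInf hbddf (Set.range_nonempty g)
    rintro y ⟨b, rfl⟩; exact ⟨e b, hfe b⟩
  · apply le_csInf ⟨f (e b0), Set.mem_range_self (e b0)⟩
    rintro y ⟨a, rfl⟩
    by_cases h : ∃ b, e b = a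
    · obtain ⟨b, rfl⟩ := h
      rw [hfe b]; exact csInf_le hbddg ⟨b, rfl⟩
    · push_neg at h
      rw [hout a h]
      calc sInf (Set.range g) ≤ g b0 := csInf_le hbddg (Set.mem_range_self b0)
        _ = f (e b0) := (hfe b0).symm
        _ ≤ 1 := hub _

lemma sup_helper {α β : Type} [Nonempty β] (f : α → ℝ) (g : β → ℝ) (e : β → α)
    (hfe : ∀ b, f (e b) = g b) (hout : ∀ a, (∀ b, e b ≠ a) → f a = 0)
    (hub : ∀ a, f a ≤ 1) (hlb : ∀ a, 0 ≤ f a) :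
    sSup (Set.range f) = sSup (Set.range g) := by
  obtain ⟨b0⟩ := ‹Nonempty β›
  have hbddf : BddAbove (Set.range f) := ⟨1, by rintro y ⟨a, rfl⟩; exact hub a⟩
  have hbddg : BddAbove (Set.range g) := ⟨1, by rintro y ⟨b, rfl⟩; rw [← hfe b]; exact hub _⟩
  apply le_antisymm
  · apply csSup_le ⟨f (e b0), Set.mem_range_self (e b0)⟩
    rintro y ⟨a, rfl⟩
    by_cases h : ∃ b, e b = a
    · obtain ⟨b, rfl⟩ := h
      rw [hfe b]; exact le_csSup hbddg ⟨b, rfl⟩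
    · push_neg at h
      rw [hout a h]
      calc (0:ℝ) ≤ f (e b0) := hlb _
        _ = g b0 := hfe b0
        _ ≤ sSup (Set.range g) := le_csSup hbddg (Set.mem_range_self b0)
  · apply csSup_le_csSup hbddf (Set.range_nonempty g)
    rintro y ⟨b, rfl⟩; exact ⟨e b, hfe b⟩

/-- Locality for full fuzzy models: evaluation on an edge-closed subset agrees. -/
lemma eval_restrict {W : Type} [Nonempty W] {R : W → W → ℝ}
    (hR : ∀ w w', R w w' ∈ Set.Icc (0:ℝ) 1) {v : ℕ → W → ℝ}
    (hv : ∀ p w, v p w ∈ Set.Icc (0:ℝ) 1)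
    (D : Set W) [Nonempty D]
    (hcl : ∀ a ∈ D, ∀ b, 0 < R a b → b ∈ D) :
    ∀ (φ : Fml) (a : D),
      Fml.eval (fun x y : D => R x y) (fun p (x : D) => v p x) φ a = Fml.eval R v φ a := by
  intro φ
  induction φ with
  | var p => intro a; rfl
  | inv φ ih => intro a; simp only [Fml.eval, ih]
  | and φ χ ih1 ih2 => intro a; simp only [Fml.eval, ih1, ih2]
  | imp φ χ ih1 ih2 => intro a; simp only [Fml.eval, ih1, ih2]
  | box φ ih =>
      intro a
      simp only [Fml.eval]
      refine (inf_helper (fun w' => Gimp (R a w') (Fml.eval R v φ w'))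
        (fun x : D => Gimp (R a x) (Fml.eval (fun x y : D => R x y) (fun p (x : D) => v p x) φ x))
        Subtype.val ?_ ?_ ?_ ?_).symm
      · intro b; beta_reduce; rw [ih b]
      · intro b hb; beta_reduce
        have hRb : R a b = 0 := by
          by_contra h
          have : 0 < R a b := lt_of_le_of_ne (hR a b).1 (Ne.symm h)
          exact hb ⟨b, hcl a a.2 b this⟩ rfl
        rw [hRb, Gimp_zero_left (eval_mem hR hv φ b).1]
      · intro b; exact Gimp_le_one (eval_mem hR hv φ b).2
      · intro b; exact Gimp_nonneg (eval_mem hR hv φ b).1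
  | dia φ ih =>
      intro a
      simp only [Fml.eval]
      refine (sup_helper (fun w' => min (R a w') (Fml.eval R v φ w'))
        (fun x : D => min (R a x) (Fml.eval (fun x y : D => R x y) (fun p (x : D) => v p x) φ x))
        Subtype.val ?_ ?_ ?_ ?_).symm
      · intro b; beta_reduce; rw [ih b]
      · intro b hb; beta_reduce
        have hRb : R a b = 0 := by
          by_contra h
          have : 0 < R a b := lt_of_le_of_ne (hR a b).1 (Ne.symm h)
          exact hb ⟨b, hcl a a.2 b this⟩ rfl
        rw [hRb]
        exact min_eq_left (eval_mem hR hv φ b).1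
      · intro b; exact min_le_of_left_le (hR a b).2
      · intro b; exact le_min (hR a b).1 (eval_mem hR hv φ b).1

/-- Locality for F-models. -/
lemma fmodel_restrict {α β : Type} [Nonempty α] [Nonempty β]
    {M : FModel α} {M' : FModel β} (e : β → α) (hG : M.Good)
    (hRa : ∀ b b', M.R (e b) (e b') = M'.R b b')
    (hT : ∀ b, M.T (e b) = M'.T b)
    (hva : ∀ p b, M.v p (e b) = M'.v p b)
    (hout : ∀ (b : β) (a : α), (∀ b', e b' ≠ a) → M.R (e b) a = 0) :
    ∀ (φ : Fml) (b : β), M.eval φ (e b) = M'.eval φ b := by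
  intro φ
  induction φ with
  | var p => intro b; exact hva p b
  | inv φ ih => intro b; simp only [FModel.eval, ih]
  | and φ χ ih1 ih2 => intro b; simp only [FModel.eval, ih1, ih2]
  | imp φ χ ih1 ih2 => intro b; simp only [FModel.eval, ih1, ih2]
  | box φ ih =>
      intro b
      simp only [FModel.eval]
      have hinf : sInf (Set.range fun w' => Gimp (M.R (e b) w') (M.eval φ w')) =
          sInf (Set.range fun w' => Gimp (M'.R b w') (M'.eval φ w')) := by
        refine inf_helper _ _ e ?_ ?_ ?_ ?_
        · intro b'; beta_reduce; rw [hRa b b', ih b']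
        · intro a ha; beta_reduce
          rw [hout b a ha, Gimp_zero_left (FModel.eval_mem hG φ a).1]
        · intro a; exact Gimp_le_one (FModel.eval_mem hG φ a).2
        · intro a; exact Gimp_nonneg (FModel.eval_mem hG φ a).1
      rw [hinf, hT b]
  | dia φ ih =>
      intro b
      simp only [FModel.eval]
      have hsup : sSup (Set.range fun w' => min (M.R (e b) w') (M.eval φ w')) =
          sSup (Set.range fun w' => min (M'.R b w') (M'.eval φ w')) := by
        refine sup_helper _ _ e ?_ ?_ ?_ ?_
        · intro b'; beta_reduce; rw [hRa b b', ih b']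
        · intro a ha; beta_reduce
          rw [hout b a ha]
          exact min_eq_left (FModel.eval_mem hG φ a).1
        · intro a; exact min_le_of_left_le (hG.1 (e b) a).2
        · intro a; exact le_min (hG.1 (e b) a).1 (FModel.eval_mem hG φ a).1
      rw [hsup, hT b]
section Tree
variable {W : Type} {E : W → W → Prop}

lemma rtg_subtype (u : W) : ∀ {y : W} (hy : Relation.ReflTransGen E u y),
    Relation.ReflTransGen (fun a b : {x // Relation.ReflTransGen E u x} => E a b)
      ⟨u, .refl⟩ ⟨y, hy⟩ := by
  intro y hy
  induction hy with
  | refl => exact .refl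
  | tail hp e ih => exact Relation.ReflTransGen.tail ih e

lemma children_unique {w : W} (htree : IsTreeLike E w) {u u' : W}
    (hu : E w u) (hu' : E w u') :
    ∀ {x : W}, Relation.ReflTransGen E u x → Relation.ReflTransGen E u' x → u = u' := by
  intro x h1
  induction h1 with
  | refl =>
      intro h2
      rcases (Relation.ReflTransGen.cases_tail h2) with h | ⟨q, hq, he⟩
      · exact h
      · have : w = q := htree.2.2.1 w q u hu he
        subst this
        exact absurd (Relation.TransGen.tail' hq hu') (htree.2.2.2 u')
  | @tail p c hp e ih =>
      intro h2
      rcases (Relation.ReflTransGen.cases_tail h2) with h | ⟨q, hq, he⟩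
      · subst h
        have : w = p := htree.2.2.1 w p c hu' e
        subst this
        exact absurd (Relation.TransGen.tail' hp hu) (htree.2.2.2 u)
      · have : p = q := htree.2.2.1 p q c e he
        subst this
        exact ih hq

lemma desc_tree {w : W} (htree : IsTreeLike E w) (u : W) :
    IsTreeLike (fun a b : {x // Relation.ReflTransGen E u x} => E a b) ⟨u, .refl⟩ := by
  refine ⟨?_, ?_, ?_, ?_⟩
  · intro y; exact rtg_subtype u y.2
  · intro x hx
    exact htree.2.2.2 u (Relation.TransGen.tail' x.2 hx)
  · intro a b c h1 h2
    exact Subtype.ext (htree.2.2.1 a.val b.val c.val h1 h2)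
  · intro x hx
    refine htree.2.2.2 x.val (Relation.TransGen.lift Subtype.val (fun a b h => h) _ _ hx)

end Tree
/-- The finite set of truth values of formulas from Σ at w. -/
noncomputable def Tset {W : Type} (R : W → W → ℝ) (v : ℕ → W → ℝ) (Sg : Finset Fml) (w : W) :
    Finset ℝ := Sg.image (fun φ => Fml.eval R v φ w)

def Fml.isModal : Fml → Bool
  | .box _ => true
  | .dia _ => true
  | _ => false

def witProp {W : Type} (R : W → W → ℝ) (v : ℕ → W → ℝ) (Sg : Finset Fml) (w : W) :
    Fml → W → Prop
  | .box ψ, u => Epos R w u ∧ ∀ t ∈ Tset R v Sg w, Fml.eval R v (.box ψ) w < t →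
      Gimp (R w u) (Fml.eval R v ψ u) < t
  | .dia ψ, u => Epos R w u ∧ ∀ t ∈ Tset R v Sg w, t < Fml.eval R v (.dia ψ) w →
      t < min (R w u) (Fml.eval R v ψ u)
  | _, _ => False

open Classical in
noncomputable def chooseWit {W : Type} (R : W → W → ℝ) (v : ℕ → W → ℝ) (Sg : Finset Fml)
    (w : W) (φ : Fml) : Option W :=
  if h : ∃ u, witProp R v Sg w φ u then some h.choose else none

section Wit
variable {W : Type} (R : W → W → ℝ) (v : ℕ → W → ℝ) (Sg : Finset Fml) (w : W)

lemma chooseWit_spec {φ : Fml} {u : W} (h : chooseWit R v Sg w φ = some u) :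
    witProp R v Sg w φ u := by
  unfold chooseWit at h
  split at h
  · rename_i hex
    cases h
    exact hex.choose_spec
  · cases h

lemma chooseWit_of_exists {φ : Fml} (h : ∃ u, witProp R v Sg w φ u) :
    ∃ u, chooseWit R v Sg w φ = some u ∧ witProp R v Sg w φ u := by
  refine ⟨h.choose, ?_, h.choose_spec⟩
  unfold chooseWit
  rw [dif_pos h]

end Wit

noncomputable def Cset {W : Type} (R : W → W → ℝ) (v : ℕ → W → ℝ) (Sg : Finset Fml) (w : W) :
    Finset W :=
  @Finset.eraseNone W
    (@Finset.image _ _ (Classical.decEq _) (chooseWit R v Sg w)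
      (Sg.filter (fun φ => φ.isModal = true)))

section Wit2
variable {W : Type} (R : W → W → ℝ) (v : ℕ → W → ℝ) (Sg : Finset Fml) (w : W)

lemma mem_Cset {u : W} :
    u ∈ Cset R v Sg w ↔ ∃ φ ∈ Sg, φ.isModal = true ∧ chooseWit R v Sg w φ = some u := by
  unfold Cset
  rw [Finset.mem_eraseNone, @Finset.mem_image _ _ (Classical.decEq _)]
  constructor
  · rintro ⟨φ, hφ, he⟩
    rcases Finset.mem_filter.1 hφ with ⟨h1, h2⟩
    exact ⟨φ, h1, h2, he⟩
  · rintro ⟨φ, h1, h2, he⟩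
    exact ⟨φ, Finset.mem_filter.2 ⟨h1, h2⟩, he⟩

lemma Cset_card_le : (Cset R v Sg w).card ≤ (Sg.filter (fun φ => φ.isModal = true)).card := by
  refine le_trans (Finset.card_le_card_of_injOn (fun a => some a) ?_ ?_)
    (@Finset.card_image_le _ _ (Sg.filter (fun φ => φ.isModal = true)) (chooseWit R v Sg w) (Classical.decEq _))
  · intro a ha
    rw [Cset, Finset.mem_coe, Finset.mem_eraseNone] at ha
    exact ha
  · intro a _ b _ h
    exact Option.some_injective _ h

lemma Cset_child {u : W} (h : u ∈ Cset R v Sg w) : Epos R w u := by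
  rcases (mem_Cset R v Sg w).1 h with ⟨φ, _, hm, he⟩
  have := chooseWit_spec R v Sg w he
  cases φ with
  | box ψ => exact this.1
  | dia ψ => exact this.1
  | var p => exact absurd this (by simp [witProp])
  | inv ψ => exact absurd this (by simp [witProp])
  | and ψ χ => exact absurd this (by simp [witProp])
  | imp ψ χ => exact absurd this (by simp [witProp])

end Wit2
section Wit3
variable {W : Type} [Nonempty W] {R : W → W → ℝ} {v : ℕ → W → ℝ} {Sg : Finset Fml} {w : W}
variable (hR : ∀ w w', R w w' ∈ Set.Icc (0:ℝ) 1) (hv : ∀ p w, v p w ∈ Set.Icc (0:ℝ) 1)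
include hR hv

lemma Tset_subset : ∀ t ∈ Tset R v Sg w, t ∈ Set.Icc (0:ℝ) 1 := by
  intro t ht
  rcases Finset.mem_image.1 ht with ⟨φ, _, rfl⟩
  exact eval_mem hR hv φ w

lemma exists_witB {ψ : Fml}
    (hex : ∃ t ∈ Tset R v Sg w, Fml.eval R v (.box ψ) w < t) :
    ∃ u, witProp R v Sg w (.box ψ) u := by
  classical
  set a := Fml.eval R v (.box ψ) w with ha
  set Tf := (Tset R v Sg w).filter (fun t => a < t) with hTf
  have hne : Tf.Nonempty := by
    rcases hex with ⟨t, ht, hat⟩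
    exact ⟨t, Finset.mem_filter.2 ⟨ht, hat⟩⟩
  set t₀ := Tf.min' hne with ht₀
  have ht₀m := Tf.min'_mem hne
  rw [Finset.mem_filter] at ht₀m
  have ht₀le : t₀ ≤ 1 := (Tset_subset hR hv t₀ ht₀m.1).2
  have hlt : a < t₀ := ht₀m.2
  have hainf : a = sInf (Set.range fun w' => Gimp (R w w') (Fml.eval R v ψ w')) := rfl
  rw [hainf] at hlt
  obtain ⟨y, ⟨u', rfl⟩, hy⟩ := exists_lt_of_csInf_lt (Set.range_nonempty _) hlt
  beta_reduce at hy
  have hchild : Epos R w u' := by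
    by_contra hc
    have h0 : R w u' = 0 := le_antisymm (not_lt.1 hc) (hR w u').1
    rw [h0, Gimp_zero_left (eval_mem hR hv ψ u').1] at hy
    linarith
  refine ⟨u', hchild, fun t ht hat => lt_of_lt_of_le hy (Tf.min'_le t (Finset.mem_filter.2 ⟨ht, hat⟩))⟩

lemma exists_witD {ψ : Fml}
    (hex : ∃ t ∈ Tset R v Sg w, t < Fml.eval R v (.dia ψ) w) :
    ∃ u, witProp R v Sg w (.dia ψ) u := by
  classical
  set b := Fml.eval R v (.dia ψ) w with hb
  set Tf := (Tset R v Sg w).filter (fun t => t < b) with hTf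
  have hne : Tf.Nonempty := by
    rcases hex with ⟨t, ht, hat⟩
    exact ⟨t, Finset.mem_filter.2 ⟨ht, hat⟩⟩
  set t₀ := Tf.max' hne with ht₀
  have ht₀m := Tf.max'_mem hne
  rw [Finset.mem_filter] at ht₀m
  have ht₀ge : 0 ≤ t₀ := (Tset_subset hR hv t₀ ht₀m.1).1
  have hlt : t₀ < b := ht₀m.2
  have hbsup : b = sSup (Set.range fun w' => min (R w w') (Fml.eval R v ψ w')) := rfl
  rw [hbsup] at hlt
  obtain ⟨y, ⟨u', rfl⟩, hy⟩ := exists_lt_of_lt_csSup (Set.range_nonempty _) hlt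
  beta_reduce at hy
  have hchild : Epos R w u' := by
    have : (0:ℝ) < min (R w u') (Fml.eval R v ψ u') := lt_of_le_of_lt ht₀ge hy
    exact (lt_min_iff.1 this).1
  refine ⟨u', hchild, fun t ht hat =>
    lt_of_le_of_lt (Tf.le_max' t (Finset.mem_filter.2 ⟨ht, hat⟩)) hy⟩

end Wit3
lemma glue {W : Type} [Nonempty W] {R : W → W → ℝ}
    (hR : ∀ w w', R w w' ∈ Set.Icc (0:ℝ) 1)
    {v : ℕ → W → ℝ} (hv : ∀ p w, v p w ∈ Set.Icc (0:ℝ) 1)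
    (Sg : Finset Fml) (hOne : Fml.One ∈ Sg) (hZero : Fml.Zero ∈ Sg)
    (hclosed : ∀ φ ∈ Sg, ∀ ψ ∈ φ.imSubs, ψ ∈ Sg)
    (w : W) (htree : IsTreeLike (Epos R) w)
    (C : Finset W) (hC : ∀ u ∈ C, Epos R w u) (N : ℕ)
    (SS : ∀ u : W, u ∈ C → Set {x // Relation.ReflTransGen (Epos R) u x})
    (hroot : ∀ u hc, (⟨u, .refl⟩ : {x // Relation.ReflTransGen (Epos R) u x}) ∈ SS u hc)
    (MM : ∀ u hc, FModel (SS u hc))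
    (hfin : ∀ u hc, (SS u hc).Finite)
    (hcard : ∀ u hc, Nat.card (SS u hc) ≤ N)
    (hgood : ∀ u hc, (MM u hc).Good)
    (hragree : ∀ u hc, ∀ a b : (SS u hc), (MM u hc).R a b = R a.val.val b.val.val)
    (htcard : ∀ u hc, ∀ a : (SS u hc), Nat.card ((MM u hc).T a) ≤ Sg.card)
    (htreeu : ∀ u hc, IsTreeLike (Epos (MM u hc).R) ⟨⟨u, .refl⟩, hroot u hc⟩)
    (heval : ∀ u hc, ∀ φ ∈ Sg, (MM u hc).eval φ ⟨⟨u, .refl⟩, hroot u hc⟩ = Fml.eval R v φ u)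
    (hwitB : ∀ ψ, Fml.box ψ ∈ Sg → (∃ t ∈ Tset R v Sg w, Fml.eval R v (.box ψ) w < t) →
        ∃ u, ∃ _ : u ∈ C, ∀ t ∈ Tset R v Sg w, Fml.eval R v (.box ψ) w < t →
          Gimp (R w u) (Fml.eval R v ψ u) < t)
    (hwitD : ∀ ψ, Fml.dia ψ ∈ Sg → (∃ t ∈ Tset R v Sg w, t < Fml.eval R v (.dia ψ) w) →
        ∃ u, ∃ _ : u ∈ C, ∀ t ∈ Tset R v Sg w, t < Fml.eval R v (.dia ψ) w →
          t < min (R w u) (Fml.eval R v ψ u)) :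
    ∃ (S : Set W) (hw : w ∈ S) (Mh : FModel S),
      S.Finite ∧ Nat.card S ≤ 1 + C.card * N ∧ Mh.Good ∧
      (∀ a b : S, Mh.R a b = R a b) ∧
      (∀ a : S, Nat.card (Mh.T a) ≤ Sg.card) ∧
      IsTreeLike (Epos Mh.R) ⟨w, hw⟩ ∧
      (∀ φ ∈ Sg, Mh.eval φ ⟨w, hw⟩ = Fml.eval R v φ w) := by
  classical
  -- basic facts about R
  have hRzero : ∀ x y : W, ¬ Epos R x y → R x y = 0 :=
    fun x y h => le_antisymm (not_lt.1 h) (hR x y).1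
  have hRww : R w w = 0 := hRzero w w (htree.2.1 w)
  set Sub : W → Set W :=
    fun u => {a | ∃ hc : u ∈ C, ∃ x : {x // Relation.ReflTransGen (Epos R) u x},
      x ∈ SS u hc ∧ x.val = a} with hSub
  set S : Set W := insert w (⋃ u ∈ C, Sub u) with hS
  have hwS : w ∈ S := Set.mem_insert _ _
  haveI : Nonempty ↥S := ⟨⟨w, hwS⟩⟩
  have hdesc : ∀ (u a : W), a ∈ Sub u → Relation.ReflTransGen (Epos R) u a := by
    rintro u a ⟨hc, x, hx, rfl⟩; exact x.2
  have hwnot : ∀ u ∈ C, w ∉ Sub u := by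
    intro u hc hw
    exact htree.2.2.2 u (Relation.TransGen.tail' (hdesc u w hw) (hC u hc))
  have hSmem : ∀ u (hc : u ∈ C) (x : {x // Relation.ReflTransGen (Epos R) u x}),
      x ∈ SS u hc → x.val ∈ S := by
    intro u hc x hx
    rw [hS]
    exact Set.mem_insert_iff.2 (Or.inr (Set.mem_biUnion hc ⟨hc, x, hx, rfl⟩))
  set P : W → Prop :=
    fun a => ∃ (u : W) (hc : u ∈ C) (x : {x // Relation.ReflTransGen (Epos R) u x})
      (hx : x ∈ SS u hc), x.val = a with hP
  have hScases : ∀ a : ↥S, a.val = w ∨ P a.val := by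
    rintro ⟨a, ha⟩
    rw [hS] at ha
    rcases Set.mem_insert_iff.1 ha with h | h
    · exact Or.inl h
    · rcases Set.mem_iUnion.1 h with ⟨u, hu⟩
      rcases Set.mem_iUnion.1 hu with ⟨hc, hau⟩
      rcases hau with ⟨hc', x, hx, he⟩
      exact Or.inr ⟨u, hc', x, hx, he⟩
  -- the key uniqueness fact
  have huniq : ∀ (u1 : W) (hc1 : u1 ∈ C) (u2 : W) (hc2 : u2 ∈ C) (a : W),
      Relation.ReflTransGen (Epos R) u1 a → Relation.ReflTransGen (Epos R) u2 a → u1 = u2 :=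
    fun u1 hc1 u2 hc2 a h1 h2 => children_unique htree (hC u1 hc1) (hC u2 hc2) h1 h2
  set Tmap : W → Set ℝ := fun a =>
    if h : P a then (MM h.choose h.choose_spec.choose).T
      ⟨h.choose_spec.choose_spec.choose, h.choose_spec.choose_spec.choose_spec.choose⟩
    else ↑(Tset R v Sg w) with hTmap
  set vmap : ℕ → W → ℝ := fun p a =>
    if h : P a then (MM h.choose h.choose_spec.choose).v p
      ⟨h.choose_spec.choose_spec.choose, h.choose_spec.choose_spec.choose_spec.choose⟩
    else v p a with hvmap
  have hauxT : ∀ (u1 : W) (hc1 : u1 ∈ C) (x1 : {x // Relation.ReflTransGen (Epos R) u1 x})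
      (hx1 : x1 ∈ SS u1 hc1) (u2 : W) (hc2 : u2 ∈ C)
      (x2 : {x // Relation.ReflTransGen (Epos R) u2 x}) (hx2 : x2 ∈ SS u2 hc2),
      x1.val = x2.val → (MM u1 hc1).T ⟨x1, hx1⟩ = (MM u2 hc2).T ⟨x2, hx2⟩ := by
    intro u1 hc1 x1 hx1 u2 hc2 x2 hx2 he
    have hu : u1 = u2 := huniq u1 hc1 u2 hc2 x1.val x1.2 (he ▸ x2.2)
    subst hu
    have hx : x1 = x2 := Subtype.ext he
    subst hx
    rfl
  have hauxv : ∀ (p : ℕ) (u1 : W) (hc1 : u1 ∈ C) (x1 : {x // Relation.ReflTransGen (Epos R) u1 x})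
      (hx1 : x1 ∈ SS u1 hc1) (u2 : W) (hc2 : u2 ∈ C)
      (x2 : {x // Relation.ReflTransGen (Epos R) u2 x}) (hx2 : x2 ∈ SS u2 hc2),
      x1.val = x2.val → (MM u1 hc1).v p ⟨x1, hx1⟩ = (MM u2 hc2).v p ⟨x2, hx2⟩ := by
    intro p u1 hc1 x1 hx1 u2 hc2 x2 hx2 he
    have hu : u1 = u2 := huniq u1 hc1 u2 hc2 x1.val x1.2 (he ▸ x2.2)
    subst hu
    have hx : x1 = x2 := Subtype.ext he
    subst hx
    rfl
  have hTspec : ∀ (u : W) (hc : u ∈ C) (x : {x // Relation.ReflTransGen (Epos R) u x})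
      (hx : x ∈ SS u hc), Tmap x.val = (MM u hc).T ⟨x, hx⟩ := by
    intro u hc x hx
    have hPx : P x.val := ⟨u, hc, x, hx, rfl⟩
    rw [hTmap]
    beta_reduce
    rw [dif_pos hPx]
    exact hauxT _ _ _ _ u hc x hx hPx.choose_spec.choose_spec.choose_spec.choose_spec
  have hvspec : ∀ (p : ℕ) (u : W) (hc : u ∈ C) (x : {x // Relation.ReflTransGen (Epos R) u x})
      (hx : x ∈ SS u hc), vmap p x.val = (MM u hc).v p ⟨x, hx⟩ := by
    intro p u hc x hx
    have hPx : P x.val := ⟨u, hc, x, hx, rfl⟩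
    rw [hvmap]
    beta_reduce
    rw [dif_pos hPx]
    exact hauxv p _ _ _ _ u hc x hx hPx.choose_spec.choose_spec.choose_spec.choose_spec
  have hPw : ¬ P w := by
    rintro ⟨u, hc, x, hx, he⟩
    exact hwnot u hc ⟨hc, x, hx, he⟩
  have hTw : Tmap w = ↑(Tset R v Sg w) := by rw [hTmap]; beta_reduce; rw [dif_neg hPw]
  have hvw : ∀ p, vmap p w = v p w := by intro p; rw [hvmap]; beta_reduce; rw [dif_neg hPw]
  set Mh : FModel ↥S := ⟨fun a b => R a.val b.val, fun a => Tmap a.val, fun p a => vmap p a.val⟩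
    with hMh
  have hTrootS : Mh.T ⟨w, hwS⟩ = ↑(Tset R v Sg w) := hTw
  have hGood : Mh.Good := by
    refine ⟨fun a b => hR a.val b.val, ?_, ?_, ?_, ?_⟩
    · intro a
      rcases hScases a with h | ⟨u, hc, x, hx, he⟩
      · show (Tmap a.val).Finite
        rw [h, hTw]
        exact (Tset R v Sg w).finite_toSet
      · show (Tmap a.val).Finite
        rw [← he, hTspec u hc x hx]
        exact (hgood u hc).2.1 _
    · intro a
      rcases hScases a with h | ⟨u, hc, x, hx, he⟩
      · show Tmap a.val ⊆ _
        rw [h, hTw]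
        exact fun t ht => Tset_subset hR hv t ht
      · show Tmap a.val ⊆ _
        rw [← he, hTspec u hc x hx]
        exact (hgood u hc).2.2.1 _
    · intro a
      rcases hScases a with h | ⟨u, hc, x, hx, he⟩
      · show (0:ℝ) ∈ Tmap a.val ∧ (1:ℝ) ∈ Tmap a.val
        rw [h, hTw]
        constructor
        · exact_mod_cast Finset.mem_image.2 ⟨Fml.Zero, hZero, eval_Zero R v w⟩
        · exact_mod_cast Finset.mem_image.2 ⟨Fml.One, hOne, eval_One R v w⟩
      · show (0:ℝ) ∈ Tmap a.val ∧ (1:ℝ) ∈ Tmap a.val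
        rw [← he, hTspec u hc x hx]
        exact (hgood u hc).2.2.2.1 _
    · intro p a
      rcases hScases a with h | ⟨u, hc, x, hx, he⟩
      · show vmap p a.val ∈ _
        rw [h, hvw]
        exact hv p w
      · show vmap p a.val ∈ _
        rw [← he, hvspec p u hc x hx]
        exact (hgood u hc).2.2.2.2 p _
  -- locality: evaluation inside a subtree agrees with the submodel
  have hloc : ∀ (u : W) (hc : u ∈ C) (φ : Fml) (y : ↥(SS u hc)),
      Mh.eval φ ⟨y.val.val, hSmem u hc y.val y.2⟩ = (MM u hc).eval φ y := by
    intro u hc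
    haveI : Nonempty ↥(SS u hc) := ⟨⟨⟨u, .refl⟩, hroot u hc⟩⟩
    exact fmodel_restrict (fun y : ↥(SS u hc) => (⟨y.val.val, hSmem u hc y.val y.2⟩ : ↥S)) hGood
      (fun b b' => (hragree u hc b b').symm)
      (fun b => hTspec u hc b.val b.2)
      (fun p b => hvspec p u hc b.val b.2)
      (by
        intro y a hne
        show R y.val.val a.val = 0
        apply hRzero
        intro hedge
        have hya : Relation.ReflTransGen (Epos R) u a.val :=
          Relation.ReflTransGen.tail y.val.2 hedge
        rcases hScases a with h | ⟨u2, hc2, x2, hx2, he2⟩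
        · rw [h] at hedge
          exact htree.2.1 _ hedge
        · have hu : u = u2 := huniq u hc u2 hc2 a.val hya (he2 ▸ x2.2)
          subst hu
          exact hne ⟨x2, hx2⟩ (Subtype.ext he2))
  have hsubroot : ∀ (u : W) (hc : u ∈ C) (hu : u ∈ S), ∀ φ ∈ Sg,
      Mh.eval φ ⟨u, hu⟩ = Fml.eval R v φ u := by
    intro u hc hu φ hφ
    have h1 := hloc u hc φ ⟨⟨u, .refl⟩, hroot u hc⟩
    have : (⟨u, hu⟩ : ↥S) = ⟨u, hSmem u hc ⟨u, .refl⟩ (hroot u hc)⟩ := rfl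
    rw [this, h1]
    exact heval u hc φ hφ
  -- R w b = 0 for points deep inside subtrees
  have hRdeep : ∀ (u : W) (hc : u ∈ C) (b : W), Relation.ReflTransGen (Epos R) u b →
      b ≠ u → R w b = 0 := by
    intro u hc b hub hne
    apply hRzero
    intro hedge
    rcases Relation.ReflTransGen.cases_tail hub with h | ⟨q, hq, he⟩
    · exact hne h
    · have : w = q := htree.2.2.1 w q b hedge he
      subst this
      exact htree.2.2.2 u (Relation.TransGen.tail' hq (hC u hc))
  -- the root evaluation agreement
  have hmain : ∀ φ ∈ Sg, Mh.eval φ ⟨w, hwS⟩ = Fml.eval R v φ w := by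
    intro φ
    induction φ with
    | var p => intro _; exact hvw p
    | inv φ ih =>
        intro hφ
        have hm : φ ∈ Sg := hclosed _ hφ φ (by simp [Fml.imSubs])
        show 1 - Mh.eval φ ⟨w, hwS⟩ = 1 - Fml.eval R v φ w
        rw [ih hm]
    | and φ χ ih1 ih2 =>
        intro hφ
        have hm1 : φ ∈ Sg := hclosed _ hφ φ (by simp [Fml.imSubs])
        have hm2 : χ ∈ Sg := hclosed _ hφ χ (by simp [Fml.imSubs])
        show min (Mh.eval φ ⟨w, hwS⟩) (Mh.eval χ ⟨w, hwS⟩) = _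
        rw [ih1 hm1, ih2 hm2]; rfl
    | imp φ χ ih1 ih2 =>
        intro hφ
        have hm1 : φ ∈ Sg := hclosed _ hφ φ (by simp [Fml.imSubs])
        have hm2 : χ ∈ Sg := hclosed _ hφ χ (by simp [Fml.imSubs])
        show Gimp (Mh.eval φ ⟨w, hwS⟩) (Mh.eval χ ⟨w, hwS⟩) = _
        rw [ih1 hm1, ih2 hm2]; rfl
    | box ψ ih =>
        intro hφ
        have hψ : ψ ∈ Sg := hclosed _ hφ ψ (by simp [Fml.imSubs])
        have haIcc := eval_mem hR hv (.box ψ) w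
        have haT : Fml.eval R v (.box ψ) w ∈ Tset R v Sg w :=
          Finset.mem_image.2 ⟨.box ψ, hφ, rfl⟩
        have hbdd : BddBelow (Set.range fun b : ↥S => Gimp (Mh.R ⟨w, hwS⟩ b) (Mh.eval ψ b)) := by
          refine ⟨0, ?_⟩
          rintro y ⟨b, rfl⟩
          exact Gimp_nonneg (FModel.eval_mem hGood ψ b).1
        have hbddW : BddBelow (Set.range fun w' => Gimp (R w w') (Fml.eval R v ψ w')) := by
          refine ⟨0, ?_⟩
          rintro y ⟨b, rfl⟩
          exact Gimp_nonneg (eval_mem hR hv ψ b).1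
        have hterm_lb : ∀ b : ↥S, Fml.eval R v (.box ψ) w ≤ Gimp (Mh.R ⟨w, hwS⟩ b) (Mh.eval ψ b) := by
          intro b
          rcases hScases b with h | ⟨u, hc, x, hx, he⟩
          · have hRb : Mh.R ⟨w, hwS⟩ b = 0 := by show R w b.val = 0; rw [h]; exact hRww
            rw [hRb, Gimp_zero_left (FModel.eval_mem hGood ψ b).1]
            exact haIcc.2
          · by_cases hbu : b.val = u
            · have hb : b = ⟨u, hbu ▸ b.2⟩ := Subtype.ext hbu
              rw [hb, hsubroot u hc (hbu ▸ b.2) ψ hψ]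
              show Fml.eval R v (.box ψ) w ≤ Gimp (R w u) (Fml.eval R v ψ u)
              exact csInf_le hbddW ⟨u, rfl⟩
            · have hRb : Mh.R ⟨w, hwS⟩ b = 0 := by
                show R w b.val = 0
                exact hRdeep u hc b.val (he ▸ x.2) hbu
              rw [hRb, Gimp_zero_left (FModel.eval_mem hGood ψ b).1]
              exact haIcc.2
        have haI : Fml.eval R v (.box ψ) w ≤
            sInf (Set.range fun b : ↥S => Gimp (Mh.R ⟨w, hwS⟩ b) (Mh.eval ψ b)) := by
          apply le_csInf (Set.range_nonempty _)
          rintro y ⟨b, rfl⟩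
          exact hterm_lb b
        have hIt : ∀ t ∈ Tset R v Sg w, Fml.eval R v (.box ψ) w < t →
            sInf (Set.range fun b : ↥S => Gimp (Mh.R ⟨w, hwS⟩ b) (Mh.eval ψ b)) < t := by
          intro t ht hat
          obtain ⟨u, hc, hwit⟩ := hwitB ψ hφ ⟨t, ht, hat⟩
          have huS : u ∈ S := hSmem u hc ⟨u, .refl⟩ (hroot u hc)
          have hterm : Gimp (Mh.R ⟨w, hwS⟩ ⟨u, huS⟩) (Mh.eval ψ ⟨u, huS⟩) =
              Gimp (R w u) (Fml.eval R v ψ u) := by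
            rw [hsubroot u hc huS ψ hψ]
          calc sInf (Set.range fun b : ↥S => Gimp (Mh.R ⟨w, hwS⟩ b) (Mh.eval ψ b))
              ≤ Gimp (Mh.R ⟨w, hwS⟩ ⟨u, huS⟩) (Mh.eval ψ ⟨u, huS⟩) := csInf_le hbdd ⟨⟨u, huS⟩, rfl⟩
            _ = Gimp (R w u) (Fml.eval R v ψ u) := hterm
            _ < t := hwit t ht hat
        show sSup {x | x ∈ Mh.T ⟨w, hwS⟩ ∧
            x ≤ sInf (Set.range fun b : ↥S => Gimp (Mh.R ⟨w, hwS⟩ b) (Mh.eval ψ b))} = _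
        rw [hTrootS]
        set A : Set ℝ := {x | x ∈ (↑(Tset R v Sg w) : Set ℝ) ∧
          x ≤ sInf (Set.range fun b : ↥S => Gimp (Mh.R ⟨w, hwS⟩ b) (Mh.eval ψ b))} with hA
        have haA : Fml.eval R v (.box ψ) w ∈ A := ⟨haT, haI⟩
        have hAbd : ∀ x ∈ A, x ≤ Fml.eval R v (.box ψ) w := by
          rintro x ⟨hxT, hxI⟩
          by_contra hcon
          push_neg at hcon
          exact absurd (lt_of_le_of_lt hxI (hIt x hxT hcon)) (lt_irrefl x)
        have hAfin : A.Finite := (Tset R v Sg w).finite_toSet.subset (fun x hx => hx.1)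
        exact le_antisymm (csSup_le ⟨_, haA⟩ hAbd) (le_csSup hAfin.bddAbove haA)
    | dia ψ ih =>
        intro hφ
        have hψ : ψ ∈ Sg := hclosed _ hφ ψ (by simp [Fml.imSubs])
        have hbIcc := eval_mem hR hv (.dia ψ) w
        have hbT : Fml.eval R v (.dia ψ) w ∈ Tset R v Sg w :=
          Finset.mem_image.2 ⟨.dia ψ, hφ, rfl⟩
        have hbddW : BddAbove (Set.range fun w' => min (R w w') (Fml.eval R v ψ w')) := by
          refine ⟨1, ?_⟩
          rintro y ⟨b, rfl⟩
          exact min_le_of_left_le (hR w b).2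
        have hterm_ub : ∀ b : ↥S, min (Mh.R ⟨w, hwS⟩ b) (Mh.eval ψ b) ≤ Fml.eval R v (.dia ψ) w := by
          intro b
          rcases hScases b with h | ⟨u, hc, x, hx, he⟩
          · have hRb : Mh.R ⟨w, hwS⟩ b = 0 := by show R w b.val = 0; rw [h]; exact hRww
            rw [hRb]
            exact le_trans (min_le_left _ _) hbIcc.1
          · by_cases hbu : b.val = u
            · have hb : b = ⟨u, hbu ▸ b.2⟩ := Subtype.ext hbu
              rw [hb, hsubroot u hc (hbu ▸ b.2) ψ hψ]
              show min (R w u) (Fml.eval R v ψ u) ≤ Fml.eval R v (.dia ψ) w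
              exact le_csSup hbddW ⟨u, rfl⟩
            · have hRb : Mh.R ⟨w, hwS⟩ b = 0 := by
                show R w b.val = 0
                exact hRdeep u hc b.val (he ▸ x.2) hbu
              rw [hRb]
              exact le_trans (min_le_left _ _) hbIcc.1
        have hbI : sSup (Set.range fun b : ↥S => min (Mh.R ⟨w, hwS⟩ b) (Mh.eval ψ b)) ≤
            Fml.eval R v (.dia ψ) w := by
          apply csSup_le (Set.range_nonempty _)
          rintro y ⟨b, rfl⟩
          exact hterm_ub b
        have hbdd : BddAbove (Set.range fun b : ↥S => min (Mh.R ⟨w, hwS⟩ b) (Mh.eval ψ b)) := by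
          refine ⟨1, ?_⟩
          rintro y ⟨b, rfl⟩
          exact min_le_of_left_le (hR _ _).2
        have hIt : ∀ t ∈ Tset R v Sg w, t < Fml.eval R v (.dia ψ) w →
            t < sSup (Set.range fun b : ↥S => min (Mh.R ⟨w, hwS⟩ b) (Mh.eval ψ b)) := by
          intro t ht hat
          obtain ⟨u, hc, hwit⟩ := hwitD ψ hφ ⟨t, ht, hat⟩
          have huS : u ∈ S := hSmem u hc ⟨u, .refl⟩ (hroot u hc)
          have hterm : min (Mh.R ⟨w, hwS⟩ ⟨u, huS⟩) (Mh.eval ψ ⟨u, huS⟩) =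
              min (R w u) (Fml.eval R v ψ u) := by
            rw [hsubroot u hc huS ψ hψ]
          calc t < min (R w u) (Fml.eval R v ψ u) := hwit t ht hat
            _ = min (Mh.R ⟨w, hwS⟩ ⟨u, huS⟩) (Mh.eval ψ ⟨u, huS⟩) := hterm.symm
            _ ≤ sSup (Set.range fun b : ↥S => min (Mh.R ⟨w, hwS⟩ b) (Mh.eval ψ b)) :=
                le_csSup hbdd ⟨⟨u, huS⟩, rfl⟩
        show sInf {x | x ∈ Mh.T ⟨w, hwS⟩ ∧
            sSup (Set.range fun b : ↥S => min (Mh.R ⟨w, hwS⟩ b) (Mh.eval ψ b)) ≤ x} = _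
        rw [hTrootS]
        set A : Set ℝ := {x | x ∈ (↑(Tset R v Sg w) : Set ℝ) ∧
          sSup (Set.range fun b : ↥S => min (Mh.R ⟨w, hwS⟩ b) (Mh.eval ψ b)) ≤ x} with hA
        have hbA : Fml.eval R v (.dia ψ) w ∈ A := ⟨hbT, hbI⟩
        have hAbd : ∀ x ∈ A, Fml.eval R v (.dia ψ) w ≤ x := by
          rintro x ⟨hxT, hxI⟩
          by_contra hcon
          push_neg at hcon
          exact absurd (lt_of_lt_of_le (hIt x hxT hcon) hxI) (lt_irrefl x)
        have hAfin : A.Finite := (Tset R v Sg w).finite_toSet.subset (fun x hx => hx.1)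
        exact le_antisymm (csInf_le hAfin.bddBelow hbA) (le_csInf ⟨_, hbA⟩ hAbd)
  -- finiteness and cardinality
  have hSubim : ∀ (u : W) (hc : u ∈ C), Sub u = Subtype.val '' (SS u hc) := by
    intro u hc
    ext a
    constructor
    · rintro ⟨hc', x, hx, rfl⟩
      exact ⟨x, hx, rfl⟩
    · rintro ⟨x, hx, rfl⟩
      exact ⟨hc, x, hx, rfl⟩
  have hSubfin : ∀ (u : W) (hc : u ∈ C), (Sub u).Finite := by
    intro u hc
    rw [hSubim u hc]
    exact (hfin u hc).image _
  have hSubcard : ∀ (u : W) (hc : u ∈ C), (Sub u).ncard ≤ N := by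
    intro u hc
    rw [hSubim u hc, Set.ncard_image_of_injective _ Subtype.val_injective]
    rw [← Nat.card_coe_set_eq]
    exact hcard u hc
  have hUfin : (⋃ u ∈ C, Sub u).Finite :=
    Set.Finite.biUnion C.finite_toSet (fun u hu => hSubfin u hu)
  have hSfin : S.Finite := by
    rw [hS]
    exact hUfin.insert w
  have hUcard : ∀ (F : Finset W), (∀ u ∈ F, u ∈ C) → (⋃ u ∈ F, Sub u).ncard ≤ F.card * N := by
    intro F
    induction F using Finset.induction with
    | empty => intro _; simp
    | @insert a F ha ih =>
        intro hFC
        have h1 : (⋃ u ∈ insert a F, Sub u) = Sub a ∪ ⋃ u ∈ F, Sub u := by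
          simp [Set.biUnion_insert]
        rw [h1]
        have hf1 : (Sub a).Finite := hSubfin a (hFC a (Finset.mem_insert_self a F))
        have hf2 : (⋃ u ∈ F, Sub u).Finite :=
          Set.Finite.biUnion F.finite_toSet (fun u hu => hSubfin u (hFC u (Finset.mem_insert_of_mem hu)))
        calc (Sub a ∪ ⋃ u ∈ F, Sub u).ncard ≤ (Sub a).ncard + (⋃ u ∈ F, Sub u).ncard :=
              Set.ncard_union_le _ _
          _ ≤ N + F.card * N := by
              exact Nat.add_le_add (hSubcard a (hFC a (Finset.mem_insert_self a F)))
                (ih (fun u hu => hFC u (Finset.mem_insert_of_mem hu)))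
          _ = (insert a F).card * N := by
              rw [Finset.card_insert_of_notMem ha]
              ring
  have hScard : Nat.card ↥S ≤ 1 + C.card * N := by
    rw [Nat.card_coe_set_eq, hS]
    calc (insert w (⋃ u ∈ C, Sub u)).ncard ≤ (⋃ u ∈ C, Sub u).ncard + 1 :=
          Set.ncard_insert_le _ _
      _ ≤ C.card * N + 1 := Nat.add_le_add_right (hUcard C (fun u hu => hu)) 1
      _ = 1 + C.card * N := by ring
  -- T cardinality
  have hTcard : ∀ a : ↥S, Nat.card (Mh.T a) ≤ Sg.card := by
    intro a
    rcases hScases a with h | ⟨u, hc, x, hx, he⟩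
    · have : Mh.T a = ↑(Tset R v Sg w) := by
        show Tmap a.val = _
        rw [h, hTw]
      rw [this, Nat.card_coe_set_eq, Set.ncard_coe_finset]
      exact Finset.card_image_le
    · have : Mh.T a = (MM u hc).T ⟨x, hx⟩ := by
        show Tmap a.val = _
        rw [← he, hTspec u hc x hx]
      rw [this]
      exact htcard u hc ⟨x, hx⟩
  -- tree-likeness
  have htreeS : IsTreeLike (Epos Mh.R) ⟨w, hwS⟩ := by
    refine ⟨?_, ?_, ?_, ?_⟩
    · intro b
      rcases hScases b with h | ⟨u, hc, x, hx, he⟩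
      · have : b = ⟨w, hwS⟩ := Subtype.ext h
        rw [this]
      · have hpath := (htreeu u hc).1 ⟨x, hx⟩
        have hlift : Relation.ReflTransGen (Epos Mh.R)
            (⟨u, hSmem u hc ⟨u, .refl⟩ (hroot u hc)⟩ : ↥S)
            ⟨x.val, hSmem u hc x hx⟩ := by
          refine Relation.ReflTransGen.lift
            (fun y : ↥(SS u hc) => (⟨y.val.val, hSmem u hc y.val y.2⟩ : ↥S)) ?_ _ _ hpath
          intro p q hpq
          show 0 < R p.val.val q.val.val
          rw [← hragree u hc p q]
          exact hpq
        have hb : b = ⟨x.val, hSmem u hc x hx⟩ := Subtype.ext he.symm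
        rw [hb]
        refine Relation.ReflTransGen.head ?_ hlift
        show 0 < R w u
        exact hC u hc
    · intro b hb
      exact htree.2.1 b.val hb
    · intro a b c h1 h2
      exact Subtype.ext (htree.2.2.1 a.val b.val c.val h1 h2)
    · intro b hb
      exact htree.2.2.2 b.val (Relation.TransGen.lift Subtype.val (fun p q h => h) _ _ hb)
  exact ⟨S, hwS, Mh, hSfin, hScard, hGood, fun a b => rfl, hTcard, htreeS, hmain⟩
lemma main_ind : ∀ (h : ℕ) (W : Type), Nonempty W → ∀ (R : W → W → ℝ),
    (∀ w w', R w w' ∈ Set.Icc (0:ℝ) 1) → ∀ (v : ℕ → W → ℝ),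
    (∀ p w, v p w ∈ Set.Icc (0:ℝ) 1) → ∀ (Sg : Finset Fml), Fml.One ∈ Sg → Fml.Zero ∈ Sg →
    (∀ φ ∈ Sg, ∀ ψ ∈ φ.imSubs, ψ ∈ Sg) → ∀ (w : W), IsTreeLike (Epos R) w →
    HeightLE (Epos R) w h →
    ∃ (S : Set W) (hw : w ∈ S) (Mh : FModel S),
      S.Finite ∧
      Nat.card S ≤ Sg.card ^ h ∧
      Mh.Good ∧
      (∀ a b : S, Mh.R a b = R a b) ∧
      (∀ a : S, Nat.card (Mh.T a) ≤ Sg.card) ∧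
      IsTreeLike (Epos Mh.R) ⟨w, hw⟩ ∧
      (∀ φ ∈ Sg, Mh.eval φ ⟨w, hw⟩ = Fml.eval R v φ w) := by
  intro h
  induction h with
  | zero =>
      intro W hne R hR v hv Sg hOne hZero hclosed w htree hht
      haveI := hne
      have hnoch : ∀ u : W, ¬ Epos R w u := by
        intro u hu
        have h1 := hht 1 (fun i => if i = 0 then w else u) rfl (by
          intro i hi
          interval_cases i
          simpa using hu)
        omega
      have hR0 : ∀ u : W, R w u = 0 :=
        fun u => le_antisymm (not_lt.1 (hnoch u)) (hR w u).1
      have hboxone : ∀ ψ : Fml, Fml.eval R v (.box ψ) w = 1 := by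
        intro ψ
        have hall : ∀ u : W, Gimp (R w u) (Fml.eval R v ψ u) = 1 := by
          intro u
          rw [hR0 u]
          exact Gimp_zero_left (eval_mem hR hv ψ u).1
        show sInf (Set.range fun w' => Gimp (R w w') (Fml.eval R v ψ w')) = 1
        apply le_antisymm
        · exact csInf_le ⟨0, by rintro y ⟨u, rfl⟩; beta_reduce; rw [hall u]; norm_num⟩ ⟨w, hall w⟩
        · apply le_csInf (Set.range_nonempty _)
          rintro y ⟨u, rfl⟩
          beta_reduce
          rw [hall u]
      have hdiazero : ∀ ψ : Fml, Fml.eval R v (.dia ψ) w = 0 := by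
        intro ψ
        have hall : ∀ u : W, min (R w u) (Fml.eval R v ψ u) = 0 := by
          intro u
          rw [hR0 u]
          exact min_eq_left (eval_mem hR hv ψ u).1
        show sSup (Set.range fun w' => min (R w w') (Fml.eval R v ψ w')) = 0
        apply le_antisymm
        · apply csSup_le (Set.range_nonempty _)
          rintro y ⟨u, rfl⟩
          beta_reduce
          rw [hall u]
        · exact le_csSup ⟨1, by rintro y ⟨u, rfl⟩; beta_reduce; rw [hall u]; norm_num⟩ ⟨w, hall w⟩
      obtain ⟨S, hw, Mh, h1, h2, h3, h4, h5, h6, h7⟩ :=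
        glue hR hv Sg hOne hZero hclosed w htree (∅ : Finset W) (by simp) 1
          (fun u hc => absurd hc (Finset.notMem_empty u))
          (fun u hc => absurd hc (Finset.notMem_empty u))
          (fun u hc => absurd hc (Finset.notMem_empty u))
          (fun u hc => absurd hc (Finset.notMem_empty u))
          (fun u hc => absurd hc (Finset.notMem_empty u))
          (fun u hc => absurd hc (Finset.notMem_empty u))
          (fun u hc => absurd hc (Finset.notMem_empty u))
          (fun u hc => absurd hc (Finset.notMem_empty u))
          (fun u hc => absurd hc (Finset.notMem_empty u))
          (fun u hc => absurd hc (Finset.notMem_empty u))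
          (by
            intro ψ hmem hex
            exfalso
            rcases hex with ⟨t, ht, hlt⟩
            rw [hboxone ψ] at hlt
            exact absurd hlt (not_lt.2 (Tset_subset hR hv t ht).2))
          (by
            intro ψ hmem hex
            exfalso
            rcases hex with ⟨t, ht, hlt⟩
            rw [hdiazero ψ] at hlt
            exact absurd hlt (not_lt.2 (Tset_subset hR hv t ht).1))
      exact ⟨S, hw, Mh, h1, by simpa using h2, h3, h4, h5, h6, h7⟩
  | succ h ih =>
      intro W hne R hR v hv Sg hOne hZero hclosed w htree hht
      haveI := hne
      classical
      set C := Cset R v Sg w with hC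
      have hCchild : ∀ u ∈ C, Epos R w u := fun u hu => Cset_child R v Sg w hu
      -- apply the induction hypothesis to each selected child
      have key : ∀ (u : W), u ∈ C →
          ∃ (S' : Set {x // Relation.ReflTransGen (Epos R) u x})
            (hw' : (⟨u, .refl⟩ : {x // Relation.ReflTransGen (Epos R) u x}) ∈ S')
            (M' : FModel S'),
            S'.Finite ∧
            Nat.card S' ≤ Sg.card ^ h ∧
            M'.Good ∧
            (∀ a b : S', M'.R a b = R a.val.val b.val.val) ∧
            (∀ a : S', Nat.card (M'.T a) ≤ Sg.card) ∧
            IsTreeLike (Epos M'.R) ⟨⟨u, .refl⟩, hw'⟩ ∧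
            (∀ φ ∈ Sg, M'.eval φ ⟨⟨u, .refl⟩, hw'⟩ = Fml.eval R v φ u) := by
        intro u hu
        have hchild := hCchild u hu
        set D : Set W := {x | Relation.ReflTransGen (Epos R) u x} with hD
        haveI : Nonempty ↑D := ⟨⟨u, Relation.ReflTransGen.refl⟩⟩
        have hRD : ∀ a b : D, (fun a b : D => R a b) a b ∈ Set.Icc (0:ℝ) 1 := fun a b => hR a b
        have htreeD : IsTreeLike (Epos (fun a b : D => R a b)) ⟨u, Relation.ReflTransGen.refl⟩ :=
          desc_tree htree u
        have hhtD : HeightLE (Epos (fun a b : D => R a b)) ⟨u, Relation.ReflTransGen.refl⟩ h := by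
          intro k f hf0 hedges
          have hk1 := hht (k+1) (fun i => if i = 0 then w else (f (i-1)).val) rfl (by
            intro i hi
            match i with
            | 0 =>
                simp only [if_pos rfl, if_neg (Nat.one_ne_zero)]
                show Epos R w (f 0).val
                rw [hf0]
                exact hchild
            | (j+1) =>
                simp only [if_neg (Nat.succ_ne_zero j), if_neg (Nat.succ_ne_zero (j+1)),
                  Nat.add_sub_cancel]
                exact hedges j (by omega))
          omega
        obtain ⟨S', hw', M', h1, h2, h3, h4, h5, h6, h7⟩ :=
          ih D this (fun a b : D => R a b) hRD (fun p (x : D) => v p x) (fun p x => hv p x)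
            Sg hOne hZero hclosed ⟨u, Relation.ReflTransGen.refl⟩ htreeD hhtD
        refine ⟨S', hw', M', h1, h2, h3, h4, h5, h6, ?_⟩
        intro φ hφ
        rw [h7 φ hφ]
        exact eval_restrict hR hv D (fun a ha b hb => Relation.ReflTransGen.tail ha hb) φ
          ⟨u, Relation.ReflTransGen.refl⟩
      choose SS hroot MM hfin hcard hgood hragree htcard htreeu heval using key
      obtain ⟨S, hw, Mh, h1, h2, h3, h4, h5, h6, h7⟩ :=
        glue hR hv Sg hOne hZero hclosed w htree C hCchild (Sg.card ^ h)
          SS hroot MM hfin hcard hgood hragree htcard htreeu heval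
          (by
            intro ψ hmem hex
            obtain ⟨u0, hcw, hwit⟩ := chooseWit_of_exists R v Sg w (exists_witB hR hv hex)
            have hu0 : u0 ∈ C := (mem_Cset R v Sg w).2 ⟨.box ψ, hmem, rfl, hcw⟩
            exact ⟨u0, hu0, hwit.2⟩)
          (by
            intro ψ hmem hex
            obtain ⟨u0, hcw, hwit⟩ := chooseWit_of_exists R v Sg w (exists_witD hR hv hex)
            have hu0 : u0 ∈ C := (mem_Cset R v Sg w).2 ⟨.dia ψ, hmem, rfl, hcw⟩
            exact ⟨u0, hu0, hwit.2⟩)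
      refine ⟨S, hw, Mh, h1, ?_, h3, h4, h5, h6, h7⟩
      -- cardinality arithmetic
      have hOZ : Fml.One ≠ Fml.Zero := by decide
      have hOm : Fml.One ∉ Sg.filter (fun φ => φ.isModal = true) := by
        intro hm; exact absurd (Finset.mem_filter.1 hm).2 (by decide)
      have hZm : Fml.Zero ∉ Sg.filter (fun φ => φ.isModal = true) := by
        intro hm; exact absurd (Finset.mem_filter.1 hm).2 (by decide)
      have hsub : insert Fml.One (insert Fml.Zero (Sg.filter (fun φ => φ.isModal = true))) ⊆ Sg := by
        intro x hx
        rcases Finset.mem_insert.1 hx with rfl | hx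
        · exact hOne
        · rcases Finset.mem_insert.1 hx with rfl | hx
          · exact hZero
          · exact Finset.mem_filter.1 hx |>.1
      have hcard2 : (Sg.filter (fun φ => φ.isModal = true)).card + 2 ≤ Sg.card := by
        have := Finset.card_le_card hsub
        rwa [Finset.card_insert_of_notMem (by
            simp only [Finset.mem_insert]
            push_neg
            exact ⟨hOZ, hOm⟩),
          Finset.card_insert_of_notMem hZm] at this
      have hCle : C.card ≤ (Sg.filter (fun φ => φ.isModal = true)).card := Cset_card_le R v Sg w
      have hpow : 1 ≤ Sg.card ^ h := Nat.one_le_pow _ _ (by omega)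
      calc Nat.card ↥S ≤ 1 + C.card * Sg.card ^ h := h2
        _ ≤ Sg.card ^ (h+1) := by
            rw [pow_succ]
            nlinarith [hCle, hcard2, hpow]

/-- Every tree-like KGinv-model of finite height can be turned into a small
tree-like F-model on a subframe agreeing on a subformula-closed set Σ at the root;
crispness is preserved. -/
theorem statement18 (W : Type) [Nonempty W] (R : W → W → ℝ)
    (hR : ∀ w w', R w w' ∈ Set.Icc (0:ℝ) 1)
    (v : ℕ → W → ℝ) (hv : ∀ p w, v p w ∈ Set.Icc (0:ℝ) 1)
    (Sg : Finset Fml) (hOne : Fml.One ∈ Sg) (hZero : Fml.Zero ∈ Sg)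
    (hclosed : ∀ φ ∈ Sg, ∀ ψ ∈ φ.imSubs, ψ ∈ Sg)
    (w : W) (htree : IsTreeLike (Epos R) w) (h : ℕ) (hht : HeightLE (Epos R) w h) :
    ∃ (S : Set W) (hw : w ∈ S) (Mh : FModel S),
      S.Finite ∧
      Nat.card S ≤ Sg.card ^ h ∧
      Mh.Good ∧
      (∀ a b : S, Mh.R a b = R a b) ∧
      (∀ a : S, Nat.card (Mh.T a) ≤ Sg.card) ∧
      IsTreeLike (Epos Mh.R) ⟨w, hw⟩ ∧
      (∀ φ ∈ Sg, Mh.eval φ ⟨w, hw⟩ = Fml.eval R v φ w) ∧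
      ((∀ a b, R a b = 0 ∨ R a b = 1) → ∀ a b : S, Mh.R a b = 0 ∨ Mh.R a b = 1) := by
  obtain ⟨S, hw, Mh, h1, h2, h3, h4, h5, h6, h7⟩ :=
    main_ind h W ‹Nonempty W› R hR v hv Sg hOne hZero hclosed w htree hht
  exact ⟨S, hw, Mh, h1, h2, h3, h4, h5, h6, h7,
    fun hcrisp a b => by rw [h4 a b]; exact hcrisp a b⟩
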